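/- Let g ∈ BV_loc^lc(ℝ,ℝ). If f : [a,b] → ℝ is ğ-continuous (continuous with respect to the pseudometric |g(s) - g(t)|), then f is g-continuous (continuous with respect to the pseudometric |g̃(s) - g̃(t)|), where g̃ is the variation function of g. The converse fails in general. -/

import Mathlib

open Set Filter MeasureTheory Topology
open scoped Classical

/-- Total variation of `g` on the interval `[a,b]`. -/
noncomputable def varOn (g : ℝ → ℝ) (a b : ℝ) : ℝ := (eVariationOn g (Set.Icc a b)).toReal

/-- `g` is left-continuous at every point. -/
def LeftCont (g : ℝ → ℝ) : Prop := ∀ t : ℝ, ContinuousWithinAt g (Set.Iio t) t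

/-- `g` has locally bounded variation. -/
def LocBV (g : ℝ → ℝ) : Prop := ∀ a b : ℝ, BoundedVariationOn g (Set.Icc a b)

/-- The variation function `g̃` of `g`. -/
noncomputable def varFun (g : ℝ → ℝ) (t : ℝ) : ℝ :=
  if 0 ≤ t then g 0 + varOn g 0 t else g 0 - varOn g t 0

/-- Jump (discontinuity) points of a left-continuous `g`. -/
def Dg (g : ℝ → ℝ) : Set ℝ := {t | ¬ ContinuousWithinAt g (Set.Ioi t) t}

/-- Interiors of constancy intervals of `g`. -/
def Cg (g : ℝ → ℝ) : Set ℝ :=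
  {t | ∃ ε > 0, ∀ s ∈ Set.Ioo (t - ε) (t + ε), g s = g t}

/-- Left endpoints of constancy components of `g` which are not jump points. -/
def Ngm (g : ℝ → ℝ) : Set ℝ :=
  {t | t ∉ Dg g ∧ t ∉ Cg g ∧ ∃ ε > 0, ∀ s ∈ Set.Ioo t (t + ε), g s = g t}

/-- Right endpoints of constancy components of `g` which are not jump points. -/
def Ngp (g : ℝ → ℝ) : Set ℝ :=
  {t | t ∉ Dg g ∧ t ∉ Cg g ∧ ∃ ε > 0, ∀ s ∈ Set.Ioo (t - ε) t, g s = g t}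

/-- The point `t*`: `t` itself, unless `t` lies in the interior of a constancy interval,
in which case it is the right endpoint of that constancy component. -/
noncomputable def tStar (g : ℝ → ℝ) (t : ℝ) : ℝ :=
  if t ∈ Cg g then sSup {s | t ≤ s ∧ ∀ u ∈ Set.Icc t s, g u = g t} else t

/-- Stieltjes derivative of `F` w.r.t. a possibly non-monotonic derivator `g`. -/
def HasStieltjesDerivAt (g F : ℝ → ℝ) (t d : ℝ) : Prop :=
  (t ∈ Dg g →
    Tendsto (fun s => (F s - F t) / (g s - g t)) (nhdsWithin t (Set.Ioi t)) (nhds d)) ∧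
  (t ∉ Dg g →
    Tendsto (fun s => (F s - F (tStar g t)) / (g s - g (tStar g t)))
      (nhdsWithin (tStar g t) {s | g s ≠ g (tStar g t)}) (nhds d))

/-- `f` is `g`-continuous on `[a,b]` (w.r.t. the pseudometric `|g̃ s - g̃ t|`). -/
def GCont (g f : ℝ → ℝ) (a b : ℝ) : Prop :=
  ∀ t ∈ Set.Icc a b, ∀ ε > 0, ∃ δ > 0, ∀ s ∈ Set.Icc a b,
    |varFun g s - varFun g t| < δ → |f s - f t| < ε

/-- `F` is `g`-absolutely continuous on `[a,b]`. -/
def GAC (g F : ℝ → ℝ) (a b : ℝ) : Prop :=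
  ∀ ε > 0, ∃ δ > 0, ∀ n : ℕ, ∀ c d : ℕ → ℝ,
    (∀ i < n, a ≤ c i ∧ c i < d i ∧ d i ≤ b) →
    (∀ i < n, ∀ j < n, i ≠ j → Disjoint (Set.Ioo (c i) (d i)) (Set.Ioo (c j) (d j))) →
    (∑ i ∈ Finset.range n, varOn g (c i) (d i)) < δ →
    (∑ i ∈ Finset.range n, |F (d i) - F (c i)|) < ε

/-- Integral of `f` over `s` with respect to a signed measure `μ`. -/
noncomputable def sInt (μ : MeasureTheory.SignedMeasure ℝ) (f : ℝ → ℝ) (s : Set ℝ) : ℝ :=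
  (∫ x in s, f x ∂μ.toJordanDecomposition.posPart) -
    (∫ x in s, f x ∂μ.toJordanDecomposition.negPart)

/-- The function `φ` of the everywhere version of the FTC. -/
noncomputable def phi (g : ℝ → ℝ) (t : ℝ) : ℝ :=
  if t ∈ Ngm g then
    Filter.liminf (fun s => |(g s - g t) / (varFun g s - varFun g t)|)
      (nhdsWithin t (Set.Iio t))
  else if t ∈ Dg g ∪ Cg g ∪ Ngp g then
    Filter.liminf (fun s => |(g s - g (tStar g t)) / (varFun g s - varFun g (tStar g t))|)
      (nhdsWithin (tStar g t) (Set.Ioi (tStar g t)))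
  else
    Filter.liminf (fun s => |(g s - g t) / (varFun g s - varFun g t)|)
      (nhdsWithin t {t}ᶜ)


private lemma abs_sub_le_varOn {g : ℝ → ℝ} (hbv : LocBV g) {a b x y : ℝ}
    (hx : x ∈ Set.Icc a b) (hy : y ∈ Set.Icc a b) : |g x - g y| ≤ varOn g a b := by
  have h := eVariationOn.edist_le g hx hy
  rw [edist_dist] at h
  have h2 := ENNReal.toReal_mono (hbv a b) h
  rwa [ENNReal.toReal_ofReal dist_nonneg, Real.dist_eq] at h2

private lemma varOn_add {g : ℝ → ℝ} (hbv : LocBV g) {a b c : ℝ} (hab : a ≤ b) (hbc : b ≤ c) :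
    varOn g a b + varOn g b c = varOn g a c := by
  have h := eVariationOn.Icc_add_Icc g (s := Set.univ) hab hbc (Set.mem_univ b)
  simp only [Set.univ_inter] at h
  unfold varOn
  rw [← ENNReal.toReal_add (hbv a b) (hbv b c), h]

private lemma varFun_sub {g : ℝ → ℝ} (hbv : LocBV g) {t s : ℝ} (hts : t ≤ s) :
    varFun g s - varFun g t = varOn g t s := by
  unfold varFun
  rcases le_or_gt 0 t with h0t | h0t
  · rw [if_pos (h0t.trans hts), if_pos h0t]
    have := varOn_add hbv h0t hts
    linarith
  · rw [if_neg (not_le.2 h0t)]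
    rcases le_or_gt 0 s with h0s | h0s
    · rw [if_pos h0s]
      have := varOn_add hbv h0t.le h0s
      linarith
    · rw [if_neg (not_le.2 h0s)]
      have := varOn_add hbv hts h0s.le
      linarith

private lemma abs_sub_le_abs_varFun {g : ℝ → ℝ} (hbv : LocBV g) (s t : ℝ) :
    |g s - g t| ≤ |varFun g s - varFun g t| := by
  rcases le_total t s with h | h
  · have h1 : |g s - g t| ≤ varOn g t s :=
      abs_sub_le_varOn hbv (Set.right_mem_Icc.2 h) (Set.left_mem_Icc.2 h)
    rw [← varFun_sub hbv h] at h1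
    exact h1.trans (le_abs_self _)
  · have h1 : |g s - g t| ≤ varOn g s t :=
      abs_sub_le_varOn hbv (Set.left_mem_Icc.2 h) (Set.right_mem_Icc.2 h)
    rw [← varFun_sub hbv h] at h1
    calc |g s - g t| ≤ varFun g t - varFun g s := h1
      _ ≤ |varFun g s - varFun g t| := by rw [abs_sub_comm]; exact le_abs_self _

/-- `ğ`-continuity (w.r.t. `|g s - g t|`) implies `g`-continuity (w.r.t. `|g̃ s - g̃ t|`);
the converse fails in general. -/
theorem stmt7 :
    (∀ (g f : ℝ → ℝ) (a b : ℝ), a < b → LeftCont g → LocBV g →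
      (∀ t ∈ Set.Icc a b, ∀ ε > 0, ∃ δ > 0, ∀ s ∈ Set.Icc a b,
        |g s - g t| < δ → |f s - f t| < ε) →
      GCont g f a b) ∧
    ¬ (∀ (g f : ℝ → ℝ) (a b : ℝ), a < b → LeftCont g → LocBV g →
      GCont g f a b →
      (∀ t ∈ Set.Icc a b, ∀ ε > 0, ∃ δ > 0, ∀ s ∈ Set.Icc a b,
        |g s - g t| < δ → |f s - f t| < ε)) :=  by
  constructor
  · intro g f a b _ _ hbv h t ht ε hε
    obtain ⟨δ, hδ, hδ'⟩ := h t ht ε hε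
    refine ⟨δ, hδ, fun s hs hvar => ?_⟩
    exact hδ' s hs (lt_of_le_of_lt (abs_sub_le_abs_varFun hbv s t) hvar)
  · intro H
    set g : ℝ → ℝ := fun x => if x ≤ 1 then x else 2 - x with hg
    have key : ∀ x y : ℝ, |g x - g y| ≤ |x - y| := by
      intro x y
      rcases abs_cases (x - y) with ⟨h, h'⟩ | ⟨h, h'⟩ <;>
      · rw [abs_sub_le_iff]
        simp only [hg]
        split_ifs <;> constructor <;> linarith
    have hlip : LipschitzWith 1 g := by
      apply LipschitzWith.of_dist_le_mul
      intro x y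
      simpa [Real.dist_eq] using key x y
    have hbv : LocBV g := by
      intro a b
      have h := hlip.locallyBoundedVariationOn Set.univ a b trivial trivial
      rwa [Set.univ_inter] at h
    have hlc : LeftCont g := fun t => hlip.continuous.continuousWithinAt
    have hgc : GCont g (varFun g) 0 2 := fun t _ ε hε => ⟨ε, hε, fun s _ h => h⟩
    have h := H g (varFun g) 0 2 (by norm_num) hlc hbv hgc
    obtain ⟨δ, hδ, hδ'⟩ := h (1/2) (by norm_num) (1/4) (by norm_num)
    have hgs : |g (3/2) - g (1/2)| < δ := by
      simp only [hg]
      norm_num [hδ]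
    have h2 := hδ' (3/2) (by norm_num) hgs
    rw [abs_of_nonneg (by rw [varFun_sub hbv (by norm_num : (1/2:ℝ) ≤ 3/2)]; exact ENNReal.toReal_nonneg)] at h2
    rw [varFun_sub hbv (by norm_num : (1/2:ℝ) ≤ 3/2)] at h2
    have h3 : |g 1 - g (1/2)| ≤ varOn g (1/2) (3/2) :=
      abs_sub_le_varOn hbv (by norm_num) (by norm_num)
    have h4 : |g 1 - g (1/2)| = 1/2 := by simp only [hg]; norm_num
    linarith
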